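/- (Universal ultrafilter lemma.) Let P : Cᵒᵖ → BoolAlg be a Boolean doctrine over a category C with finite products, let (F_X)_{X ∈ C} be a universal filter for P and (I_X)_{X ∈ C} a universal ideal for P such that F_X ∩ I_X = ∅ for all X ∈ C. Then there is a universal ultrafilter (G_X)_{X ∈ C} for P such that, for every X ∈ C, F_X ⊆ G_X and G_X ∩ I_X = ∅. -/

import Mathlib

open CategoryTheory CategoryTheory.Limits Opposite

universe w v u v₁ u₁ v₂ u₂ v₃ u₃

namespace BooleanDoctrine

/-- Elements of a Boolean algebra in the category `BoolAlg` can be acted on by morphisms. -/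
instance (X Y : BoolAlg) : FunLike (X ⟶ Y) X Y :=
  { coe := fun f => f.hom
    coe_injective := fun _ _ h => BoolAlg.Hom.ext (DFunLike.coe_injective h) }

/-- A filter of a Boolean algebra: contains `⊤`, closed under binary meets, upward closed. -/
def IsBAFilter {A : Type*} [BooleanAlgebra A] (F : Set A) : Prop :=
  (⊤ : A) ∈ F ∧ (∀ a b : A, a ∈ F → b ∈ F → a ⊓ b ∈ F) ∧ ∀ a b : A, a ∈ F → a ≤ b → b ∈ F

/-- The fiber of a Boolean doctrine at an object of the base category. -/
abbrev fiber {C : Type u₁} [Category.{v₁} C] (P : Cᵒᵖ ⥤ BoolAlg.{w}) (X : C) : Type w :=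
  P.obj (op X)

/-- A universal filter for a Boolean doctrine `P : Cᵒᵖ ⥤ BoolAlg`. -/
def IsUniversalFilter {C : Type u₁} [Category.{v₁} C] [HasFiniteProducts C]
    (P : Cᵒᵖ ⥤ BoolAlg.{w}) (F : ∀ X : C, Set (P.obj (op X))) : Prop :=
  (∀ (X Y : C) (f : X ⟶ Y) (α : P.obj (op Y)), α ∈ F Y → P.map f.op α ∈ F X) ∧
    ∀ X : C, IsBAFilter (F X)

/-- A universal ideal for a Boolean doctrine `P : Cᵒᵖ ⥤ BoolAlg`. -/
def IsUniversalIdeal {C : Type u₁} [Category.{v₁} C] [HasFiniteProducts C]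
    (P : Cᵒᵖ ⥤ BoolAlg.{w}) (I : ∀ X : C, Set (P.obj (op X))) : Prop :=
  (∀ (X Y : C) (m : ℕ) (f : Fin m → (X ⟶ Y)) (α : P.obj (op Y)),
      (Finset.univ.inf fun j => P.map (f j).op α) ∈ I X → α ∈ I Y) ∧
    (∀ (X : C) (a b : P.obj (op X)), a ≤ b → b ∈ I X → a ∈ I X) ∧
    (∀ (X₁ X₂ : C) (α₁ : P.obj (op X₁)) (α₂ : P.obj (op X₂)), α₁ ∈ I X₁ → α₂ ∈ I X₂ →
      P.map (prod.fst : X₁ ⨯ X₂ ⟶ X₁).op α₁ ⊔ P.map (prod.snd : X₁ ⨯ X₂ ⟶ X₂).op α₂ ∈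
        I (X₁ ⨯ X₂)) ∧
    (⊥ : P.obj (op (⊤_ C))) ∈ I (⊤_ C)

/-- A universal ultrafilter for a Boolean doctrine `P : Cᵒᵖ ⥤ BoolAlg`. -/
def IsUniversalUltrafilter {C : Type u₁} [Category.{v₁} C] [HasFiniteProducts C]
    (P : Cᵒᵖ ⥤ BoolAlg.{w}) (F : ∀ X : C, Set (P.obj (op X))) : Prop :=
  (∀ (X Y : C) (f : X ⟶ Y) (α : P.obj (op Y)), α ∈ F Y → P.map f.op α ∈ F X) ∧
    (∀ X : C, IsBAFilter (F X)) ∧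
    (∀ (X₁ X₂ : C) (α₁ : P.obj (op X₁)) (α₂ : P.obj (op X₂)),
      P.map (prod.fst : X₁ ⨯ X₂ ⟶ X₁).op α₁ ⊔ P.map (prod.snd : X₁ ⨯ X₂ ⟶ X₂).op α₂ ∈
          F (X₁ ⨯ X₂) →
        α₁ ∈ F X₁ ∨ α₂ ∈ F X₂) ∧
    (⊥ : P.obj (op (⊤_ C))) ∉ F (⊤_ C)

/-- Richness of a Boolean doctrine with respect to a family of subsets of the fibers. -/
def IsRich {C : Type u₁} [Category.{v₁} C] [HasFiniteProducts C]
    (P : Cᵒᵖ ⥤ BoolAlg.{w}) (F : ∀ X : C, Set (P.obj (op X))) : Prop :=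
  ∀ (X : C) (α : P.obj (op X)), α ∉ F X → ∃ c : (⊤_ C) ⟶ X, P.map c.op α ∉ F (⊤_ C)

/-- The failure of the "universal closure" of `a` witnessed by a constant `c : ⊤ ⟶ X`. -/
def IsRichAt {C : Type u₁} [Category.{v₁} C] [HasFiniteProducts C]
    (P : Cᵒᵖ ⥤ BoolAlg.{w}) (F : ∀ X : C, Set (P.obj (op X)))
    (X : C) (a : P.obj (op X)) : Prop :=
  ∃ c : (⊤_ C) ⟶ X, P.map c.op a ∉ F (⊤_ C)

/-- The universal filter generated by a family of subsets of the fibers: the intersection of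
all universal filters containing the family componentwise. -/
def genUnivFilter {C : Type u₁} [Category.{v₁} C] [HasFiniteProducts C]
    (P : Cᵒᵖ ⥤ BoolAlg.{w}) (A : ∀ X : C, Set (P.obj (op X))) :
    ∀ X : C, Set (P.obj (op X)) := fun X =>
  {φ | ∀ G : ∀ X' : C, Set (P.obj (op X')),
    IsUniversalFilter P G → (∀ X', A X' ⊆ G X') → φ ∈ G X}

/-- The universal ideal generated by a family of subsets of the fibers: the intersection of
all universal ideals containing the family componentwise. -/
def genUnivIdeal {C : Type u₁} [Category.{v₁} C] [HasFiniteProducts C]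
    (P : Cᵒᵖ ⥤ BoolAlg.{w}) (A : ∀ X : C, Set (P.obj (op X))) :
    ∀ X : C, Set (P.obj (op X)) := fun X =>
  {φ | ∀ J : ∀ X' : C, Set (P.obj (op X')),
    IsUniversalIdeal P J → (∀ X', A X' ⊆ J X') → φ ∈ J X}

/-- The family of subsets of the fibers placing the element `α i` in the component `Y i`. -/
def familyOfPoints {C : Type u₁} [Category.{v₁} C] (P : Cᵒᵖ ⥤ BoolAlg.{w}) {ι : Type u₃}
    (Y : ι → C) (α : ∀ i, P.obj (op (Y i))) : ∀ X : C, Set (P.obj (op X)) := fun X =>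
  {a | ∃ (i : ι) (h : Y i = X), a = P.map (eqToHom h.symm).op (α i)}

/-- The subsets doctrine, sending a set to its powerset Boolean algebra and a function to
its preimage map. -/
def subsetsDoctrine : (Type v)ᵒᵖ ⥤ BoolAlg.{v} where
  obj X := BoolAlg.of (Set X.unop)
  map f := BoolAlg.ofHom
    { toFun := fun S => f.unop ⁻¹' S
      map_sup' := fun _ _ => rfl
      map_inf' := fun _ _ => rfl
      map_top' := rfl
      map_bot' := rfl }
  map_id _ := rfl
  map_comp _ _ := rfl

/-- A Boolean doctrine morphism: a finite-product-preserving functor together with a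
natural transformation. -/
structure DoctrineHom {C : Type u₁} [Category.{v₁} C] {D : Type u₂} [Category.{v₂} D]
    (P : Cᵒᵖ ⥤ BoolAlg.{w}) (R : Dᵒᵖ ⥤ BoolAlg.{w}) where
  functor : C ⥤ D
  preserves : PreservesFiniteProducts functor
  trans : P ⟶ functor.op ⋙ R

/-- Composition of Boolean doctrine morphisms. -/
def DoctrineHom.comp {C : Type u₁} [Category.{v₁} C] {D : Type u₂} [Category.{v₂} D]
    {E : Type u₃} [Category.{v₃} E]
    {P : Cᵒᵖ ⥤ BoolAlg.{w}} {R : Dᵒᵖ ⥤ BoolAlg.{w}} {S : Eᵒᵖ ⥤ BoolAlg.{w}}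
    (Φ : DoctrineHom P R) (Ψ : DoctrineHom R S) : DoctrineHom P S where
  functor := Φ.functor ⋙ Ψ.functor
  preserves := by
    have := Φ.preserves; have := Ψ.preserves
    infer_instance
  trans := Φ.trans ≫ Functor.whiskerLeft Φ.functor.op Ψ.trans

/-- A first-order structure on a Boolean doctrine: fiberwise right adjoints to reindexing
along first projections, satisfying the Beck–Chevalley condition. -/
structure FOStructure {C : Type u₁} [Category.{v₁} C] [HasFiniteProducts C]
    (P : Cᵒᵖ ⥤ BoolAlg.{w}) where
  fa : ∀ X Y : C, P.obj (op (X ⨯ Y)) → P.obj (op X)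
  adj : ∀ (X Y : C) (α : P.obj (op X)) (β : P.obj (op (X ⨯ Y))),
      α ≤ fa X Y β ↔ P.map (prod.fst : X ⨯ Y ⟶ X).op α ≤ β
  bc : ∀ (X X' Y : C) (f : X' ⟶ X) (β : P.obj (op (X ⨯ Y))),
      P.map f.op (fa X Y β) = fa X' Y (P.map (prod.map f (𝟙 Y)).op β)

/-- The existential quantifier `∃ = ¬∀¬` associated to a first-order structure. -/
noncomputable def FOStructure.ex {C : Type u₁} [Category.{v₁} C] [HasFiniteProducts C]
    {P : Cᵒᵖ ⥤ BoolAlg.{w}} (fo : FOStructure P) (X Y : C)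
    (β : P.obj (op (X ⨯ Y))) : P.obj (op X) :=
  (fo.fa X Y βᶜ)ᶜ

/-- The canonical comparison morphism `M X ⨯ M Y ⟶ M (X ⨯ Y)` of a Boolean doctrine
morphism, inverse to the product comparison morphism. -/
noncomputable def DoctrineHom.prodPair {C : Type u₁} [Category.{v₁} C] [HasFiniteProducts C]
    {D : Type u₂} [Category.{v₂} D] [HasFiniteProducts D]
    {P : Cᵒᵖ ⥤ BoolAlg.{w}} {R : Dᵒᵖ ⥤ BoolAlg.{w}} (Φ : DoctrineHom P R) (X Y : C) :
    (Φ.functor.obj X ⨯ Φ.functor.obj Y) ⟶ Φ.functor.obj (X ⨯ Y) :=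
  letI := Φ.preserves
  (PreservesLimitPair.iso Φ.functor X Y).inv

/-- The image of an element of `P (X ⨯ Y)` in `R (M X ⨯ M Y)`, transported along the
canonical isomorphism `M (X ⨯ Y) ≅ M X ⨯ M Y`. -/
noncomputable def DoctrineHom.transProd {C : Type u₁} [Category.{v₁} C] [HasFiniteProducts C]
    {D : Type u₂} [Category.{v₂} D] [HasFiniteProducts D]
    {P : Cᵒᵖ ⥤ BoolAlg.{w}} {R : Dᵒᵖ ⥤ BoolAlg.{w}} (Φ : DoctrineHom P R) (X Y : C)
    (α : P.obj (op (X ⨯ Y))) : R.obj (op (Φ.functor.obj X ⨯ Φ.functor.obj Y)) :=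
  R.map (Φ.prodPair X Y).op (Φ.trans.app (op (X ⨯ Y)) α)

/-- A Boolean doctrine morphism between first-order Boolean doctrines is first-order when it
commutes with the universal quantifiers. -/
def DoctrineHom.IsFO {C : Type u₁} [Category.{v₁} C] [HasFiniteProducts C]
    {D : Type u₂} [Category.{v₂} D] [HasFiniteProducts D]
    {P : Cᵒᵖ ⥤ BoolAlg.{w}} {R : Dᵒᵖ ⥤ BoolAlg.{w}} (Φ : DoctrineHom P R)
    (foP : FOStructure P) (foR : FOStructure R) : Prop :=
  ∀ (X Y : C) (β : P.obj (op (X ⨯ Y))),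
    (Φ.trans.app (op X) (foP.fa X Y β) : R.obj (op (Φ.functor.obj X))) =
      foR.fa (Φ.functor.obj X) (Φ.functor.obj Y) (Φ.transProd X Y β)

/-- The Boolean doctrine morphism with identity functor part induced by a natural
transformation between two doctrines over the same base. -/
def idDoctrineHom {C : Type u₁} [Category.{v₁} C] {P Q : Cᵒᵖ ⥤ BoolAlg.{w}} (η : P ⟶ Q) :
    DoctrineHom P Q where
  functor := 𝟭 C
  preserves := inferInstance
  trans := η

/-- A quantifier completion of a Boolean doctrine `P`: a first-order Boolean doctrine `Q`
over the same base category together with a Boolean doctrine morphism `(𝟭 C, ι) : P ⟶ Q`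
whose functor part is the identity, such that every Boolean doctrine morphism from `P` to a
first-order Boolean doctrine factors uniquely through it via a first-order Boolean doctrine
morphism. -/
structure QuantifierCompletion.{w', v', u', v₁', u₁'} {C : Type u₁'} [Category.{v₁'} C]
    [HasFiniteProducts C] (P : Cᵒᵖ ⥤ BoolAlg.{w'}) where
  Q : Cᵒᵖ ⥤ BoolAlg.{w'}
  fo : FOStructure Q
  ι : P ⟶ Q
  univ : ∀ {D : Type u'} [Category.{v'} D] [HasFiniteProducts D]
      (R : Dᵒᵖ ⥤ BoolAlg.{w'}) (foR : FOStructure R) (Φ : DoctrineHom P R),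
      ∃! Ψ : DoctrineHom Q R, Ψ.IsFO fo foR ∧ Φ = (idDoctrineHom ι).comp Ψ

/-- A propositional model of a Boolean doctrine: a Boolean doctrine morphism to the
subsets doctrine. -/
abbrev PropModel {C : Type u} [Category.{v} C] (P : Cᵒᵖ ⥤ BoolAlg.{v}) :=
  DoctrineHom P subsetsDoctrine.{v}

/-- The subset of `M X` interpreting an element `α ∈ P X` in a propositional model. -/
def PropModel.interp {C : Type u} [Category.{v} C] {P : Cᵒᵖ ⥤ BoolAlg.{v}}
    (M : PropModel P) {X : C} (α : P.obj (op X)) : Set (M.functor.obj X) :=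
  M.trans.app (op X) α



/-- The object map of a Boolean doctrine morphism. -/
abbrev DoctrineHom.onObj {C : Type u₁} [Category.{v₁} C] {D : Type u₂} [Category.{v₂} D]
    {P : Cᵒᵖ ⥤ BoolAlg.{w}} {R : Dᵒᵖ ⥤ BoolAlg.{w}} (Φ : DoctrineHom P R) (X : C) : D :=
  Φ.functor.obj X

/-- The component at `X` of the natural transformation of a Boolean doctrine morphism,
applied to an element of the fiber. -/
abbrev DoctrineHom.appAt {C : Type u₁} [Category.{v₁} C] {D : Type u₂} [Category.{v₂} D]
    {P : Cᵒᵖ ⥤ BoolAlg.{w}} {R : Dᵒᵖ ⥤ BoolAlg.{w}} (Φ : DoctrineHom P R) (X : C)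
    (a : P.obj (op X)) : R.obj (op (Φ.functor.obj X)) :=
  Φ.trans.app (op X) a

section UltrafilterLemma

instance (X Y : BoolAlg) : BoundedLatticeHomClass (X ⟶ Y) X Y where
  map_sup f := map_sup f.hom
  map_inf f := map_inf f.hom
  map_top f := map_top f.hom
  map_bot f := map_bot f.hom

/-- Finite infimum of a list in a Boolean algebra. -/
def linf {A : Type*} [BooleanAlgebra A] : List A → A
  | [] => ⊤
  | a :: l => a ⊓ linf l

theorem linf_map {A B : Type*} [BooleanAlgebra A] [BooleanAlgebra B] {Fc : Type*}
    [FunLike Fc A B] [BoundedLatticeHomClass Fc A B] (h : Fc) (l : List A) :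
    h (linf l) = linf (l.map h) := by
  induction l with
  | nil => simpa [linf] using map_top h
  | cons a l ih => simp [linf, map_inf, ih]

theorem linf_append {A : Type*} [BooleanAlgebra A] (l₁ l₂ : List A) :
    linf (l₁ ++ l₂) = linf l₁ ⊓ linf l₂ := by
  induction l₁ with
  | nil => simp [linf]
  | cons a l ih => simp [linf, ih, inf_assoc]

theorem sup_linf_mem_left {A : Type*} [BooleanAlgebra A] {S : Set A} (hS : IsBAFilter S)
    {a : A} (v : List A) (h : ∀ b ∈ v, a ⊔ b ∈ S) : a ⊔ linf v ∈ S := by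
  induction v with
  | nil => simpa [linf] using hS.1
  | cons b v ih =>
    have : a ⊔ (b ⊓ linf v) = (a ⊔ b) ⊓ (a ⊔ linf v) := sup_inf_left a b (linf v)
    rw [linf, this]
    exact hS.2.1 _ _ (h b (by simp)) (ih fun b hb => h b (by simp [hb]))

theorem sup_linf_mem {A : Type*} [BooleanAlgebra A] {S : Set A} (hS : IsBAFilter S)
    (u v : List A) (h : ∀ a ∈ u, ∀ b ∈ v, a ⊔ b ∈ S) : linf u ⊔ linf v ∈ S := by
  induction u with
  | nil => simpa [linf] using hS.1
  | cons a u ih =>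
    have : (a ⊓ linf u) ⊔ linf v = (a ⊔ linf v) ⊓ (linf u ⊔ linf v) :=
      sup_inf_right a (linf u) (linf v)
    rw [linf, this]
    exact hS.2.1 _ _ (sup_linf_mem_left hS v (h a (by simp)))
      (ih fun a ha b hb => h a (by simp [ha]) b hb)

variable {C : Type u₁} [Category.{v₁} C] [HasFiniteProducts C] {P : Cᵒᵖ ⥤ BoolAlg.{w}}

theorem pmap_comp {X Y Z : C} (f : X ⟶ Y) (g : Y ⟶ Z) (a : P.obj (op Z)) :
    P.map f.op (P.map g.op a) = P.map (f ≫ g).op a := by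
  rw [op_comp, P.map_comp]; rfl

/-- The universal filter generated by a universal filter together with one new element. -/
def extFilter (G : ∀ X : C, Set (P.obj (op X))) (X : C) (α : P.obj (op X)) :
    ∀ Y : C, Set (P.obj (op Y)) := fun Y =>
  {β | ∃ (L : List (Y ⟶ X)) (φ : P.obj (op Y)), φ ∈ G Y ∧
      φ ⊓ linf (L.map fun f => P.map f.op α) ≤ β}

theorem subset_extFilter (G : ∀ X : C, Set (P.obj (op X))) (X : C) (α : P.obj (op X))
    (Y : C) : G Y ⊆ extFilter G X α Y := fun φ hφ =>
  ⟨[], φ, hφ, by simpa [linf] using inf_le_left⟩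

theorem mem_extFilter_self (G : ∀ X : C, Set (P.obj (op X))) (X : C) (α : P.obj (op X))
    (hG : IsUniversalFilter P G) : α ∈ extFilter G X α X := by
  refine ⟨[𝟙 X], ⊤, (hG.2 X).1, ?_⟩
  simp only [linf, List.map_cons, List.map_nil]
  have h1 : P.map (𝟙 X).op α = α := by
    have h2 : (𝟙 X).op = 𝟙 (op X) := rfl
    rw [h2, P.map_id]
    rfl
  rw [h1]
  simp

theorem extFilter_isUniversalFilter (G : ∀ X : C, Set (P.obj (op X))) (X : C)
    (α : P.obj (op X)) (hG : IsUniversalFilter P G) :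
    IsUniversalFilter P (extFilter G X α) := by
  constructor
  · rintro Z Y g β ⟨L, φ, hφ, hle⟩
    refine ⟨L.map (fun f => g ≫ f), P.map g.op φ, hG.1 Z Y g φ hφ, ?_⟩
    have hmap : ((L.map (fun f => g ≫ f)).map fun f => P.map f.op α) =
        (L.map fun f => P.map f.op α).map (P.map g.op) := by
      rw [List.map_map, List.map_map]
      refine List.map_congr_left fun f _ => ?_
      exact (pmap_comp g f α).symm
    rw [hmap, ← linf_map, ← map_inf]
    exact OrderHomClass.mono _ hle
  · intro Y
    refine ⟨⟨[], ⊤, (hG.2 Y).1, by simp⟩, ?_, ?_⟩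
    · rintro a b ⟨L₁, φ₁, hφ₁, h₁⟩ ⟨L₂, φ₂, hφ₂, h₂⟩
      refine ⟨L₁ ++ L₂, φ₁ ⊓ φ₂, (hG.2 Y).2.1 _ _ hφ₁ hφ₂, ?_⟩
      rw [List.map_append, linf_append]
      refine le_inf (le_trans ?_ h₁) (le_trans ?_ h₂)
      · exact inf_le_inf inf_le_left inf_le_left
      · exact inf_le_inf inf_le_right inf_le_right
    · rintro a b ⟨L, φ, hφ, h⟩ hab
      exact ⟨L, φ, hφ, le_trans h hab⟩

end UltrafilterLemma

theorem stmt1 {C : Type u₁} [Category.{v₁} C] [HasFiniteProducts C]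
    (P : Cᵒᵖ ⥤ BoolAlg.{w}) (F I : ∀ X : C, Set (P.obj (op X)))
    (hF : IsUniversalFilter P F) (hI : IsUniversalIdeal P I)
    (hdisj : ∀ X : C, F X ∩ I X = ∅) :
    ∃ G : ∀ X : C, Set (P.obj (op X)),
      IsUniversalUltrafilter P G ∧ (∀ X : C, F X ⊆ G X) ∧ ∀ X : C, G X ∩ I X = ∅ := by
  classical
  set S : Set (∀ X : C, Set (P.obj (op X))) :=
    {G | IsUniversalFilter P G ∧ (∀ X, F X ⊆ G X) ∧ ∀ X, G X ∩ I X = ∅} with hSdef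
  have hFS : F ∈ S := ⟨hF, fun X => subset_rfl, hdisj⟩
  have hub : ∀ c ⊆ S, IsChain (· ≤ ·) c → ∀ y ∈ c, ∃ ub ∈ S, ∀ z ∈ c, z ≤ ub := by
    intro c hcS hchain y hyc
    refine ⟨fun X => {a | ∃ g ∈ c, a ∈ g X}, ⟨⟨?_, ?_⟩, ?_, ?_⟩, ?_⟩
    · rintro X Y f α ⟨g, hg, hα⟩
      exact ⟨g, hg, (hcS hg).1.1 X Y f α hα⟩
    · intro X
      refine ⟨⟨y, hyc, ((hcS hyc).1.2 X).1⟩, ?_, ?_⟩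
      · rintro a b ⟨g₁, hg₁, ha⟩ ⟨g₂, hg₂, hb⟩
        rcases hchain.total hg₁ hg₂ with h | h
        · exact ⟨g₂, hg₂, ((hcS hg₂).1.2 X).2.1 a b (h X ha) hb⟩
        · exact ⟨g₁, hg₁, ((hcS hg₁).1.2 X).2.1 a b ha (h X hb)⟩
      · rintro a b ⟨g, hg, ha⟩ hab
        exact ⟨g, hg, ((hcS hg).1.2 X).2.2 a b ha hab⟩
    · intro X a ha
      exact ⟨y, hyc, (hcS hyc).2.1 X ha⟩
    · intro X
      rw [Set.eq_empty_iff_forall_notMem]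
      rintro a ⟨⟨g, hg, hag⟩, haI⟩
      exact Set.eq_empty_iff_forall_notMem.mp ((hcS hg).2.2 X) a ⟨hag, haI⟩
    · intro z hz X a ha
      exact ⟨z, hz, ha⟩
  obtain ⟨G, hFG, hGmax⟩ := zorn_le_nonempty₀ S hub F hFS
  obtain ⟨⟨hGre, hGfil⟩, hFsub, hGdisj⟩ := hGmax.1
  have hGuf : IsUniversalFilter P G := ⟨hGre, hGfil⟩
  refine ⟨G, ⟨hGre, hGfil, ?_, ?_⟩, hFsub, hGdisj⟩
  · -- primality
    intro X₁ X₂ α₁ α₂ hσ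
    by_contra hcon
    push_neg at hcon
    obtain ⟨h₁, h₂⟩ := hcon
    -- the filter generated by G and αᵢ meets I
    have key : ∀ (X : C) (α : P.obj (op X)), α ∉ G X →
        ∃ (Y : C) (β : P.obj (op Y)), β ∈ I Y ∧ β ∈ extFilter G X α Y := by
      intro X α hα
      by_contra hno
      push_neg at hno
      have hmem : extFilter G X α ∈ S := by
        refine ⟨extFilter_isUniversalFilter G X α hGuf, ?_, ?_⟩
        · intro Y a ha
          exact subset_extFilter G X α Y (hFsub Y ha)
        · intro Y
          rw [Set.eq_empty_iff_forall_notMem]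
          rintro a ⟨haE, haI⟩
          exact hno Y a haI haE
      have hle : G ≤ extFilter G X α := fun Y => subset_extFilter G X α Y
      have := hGmax.2 hmem hle
      exact hα (this X (mem_extFilter_self G X α hGuf))
    obtain ⟨Y₁, β₁, hβ₁I, L₁, φ₁, hφ₁, hle₁⟩ := key X₁ α₁ h₁
    obtain ⟨Y₂, β₂, hβ₂I, L₂, φ₂, hφ₂, hle₂⟩ := key X₂ α₂ h₂
    have hφ : P.map (prod.fst : Y₁ ⨯ Y₂ ⟶ Y₁).op φ₁ ⊓ P.map (prod.snd : Y₁ ⨯ Y₂ ⟶ Y₂).op φ₂ ∈ G (Y₁ ⨯ Y₂) :=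
      (hGfil (Y₁ ⨯ Y₂)).2.1 _ _ (hGre _ Y₁ prod.fst φ₁ hφ₁) (hGre _ Y₂ prod.snd φ₂ hφ₂)
    have hβ : P.map (prod.fst : Y₁ ⨯ Y₂ ⟶ Y₁).op β₁ ⊔ P.map (prod.snd : Y₁ ⨯ Y₂ ⟶ Y₂).op β₂ ∈ I (Y₁ ⨯ Y₂) :=
      hI.2.2.1 Y₁ Y₂ β₁ β₂ hβ₁I hβ₂I
    set u : List (P.obj (op (Y₁ ⨯ Y₂))) := L₁.map fun f => P.map ((prod.fst : Y₁ ⨯ Y₂ ⟶ Y₁) ≫ f).op α₁ with hu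
    set v : List (P.obj (op (Y₁ ⨯ Y₂))) := L₂.map fun f => P.map ((prod.snd : Y₁ ⨯ Y₂ ⟶ Y₂) ≫ f).op α₂ with hv
    have hA : P.map (prod.fst : Y₁ ⨯ Y₂ ⟶ Y₁).op (linf (L₁.map fun f => P.map f.op α₁)) = linf u := by
      rw [linf_map, List.map_map, hu]
      congr 1
      refine List.map_congr_left fun f _ => ?_
      exact pmap_comp _ f α₁
    have hB : P.map (prod.snd : Y₁ ⨯ Y₂ ⟶ Y₂).op (linf (L₂.map fun f => P.map f.op α₂)) = linf v := by
      rw [linf_map, List.map_map, hv]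
      congr 1
      refine List.map_congr_left fun f _ => ?_
      exact pmap_comp _ f α₂
    have hAB : linf u ⊔ linf v ∈ G (Y₁ ⨯ Y₂) := by
      refine sup_linf_mem (hGfil (Y₁ ⨯ Y₂)) u v ?_
      rintro a ha b hb
      rw [hu, List.mem_map] at ha
      rw [hv, List.mem_map] at hb
      obtain ⟨f, hf, rfl⟩ := ha
      obtain ⟨g, hg, rfl⟩ := hb
      have hh := hGre (Y₁ ⨯ Y₂) (X₁ ⨯ X₂) (prod.lift ((prod.fst : Y₁ ⨯ Y₂ ⟶ Y₁) ≫ f) ((prod.snd : Y₁ ⨯ Y₂ ⟶ Y₂) ≫ g)) _ hσ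
      have heq : P.map (prod.lift ((prod.fst : Y₁ ⨯ Y₂ ⟶ Y₁) ≫ f) ((prod.snd : Y₁ ⨯ Y₂ ⟶ Y₂) ≫ g)).op
          (P.map (prod.fst : X₁ ⨯ X₂ ⟶ X₁).op α₁ ⊔ P.map (prod.snd : X₁ ⨯ X₂ ⟶ X₂).op α₂) =
          P.map ((prod.fst : Y₁ ⨯ Y₂ ⟶ Y₁) ≫ f).op α₁ ⊔ P.map ((prod.snd : Y₁ ⨯ Y₂ ⟶ Y₂) ≫ g).op α₂ := by
        rw [map_sup, pmap_comp, pmap_comp, prod.lift_fst, prod.lift_snd]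
      rw [heq] at hh
      exact hh
    have hmem : (P.map (prod.fst : Y₁ ⨯ Y₂ ⟶ Y₁).op φ₁ ⊓ P.map (prod.snd : Y₁ ⨯ Y₂ ⟶ Y₂).op φ₂) ⊓ (linf u ⊔ linf v) ∈ G (Y₁ ⨯ Y₂) :=
      (hGfil (Y₁ ⨯ Y₂)).2.1 _ _ hφ hAB
    have hineq : (P.map (prod.fst : Y₁ ⨯ Y₂ ⟶ Y₁).op φ₁ ⊓ P.map (prod.snd : Y₁ ⨯ Y₂ ⟶ Y₂).op φ₂) ⊓ (linf u ⊔ linf v) ≤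
        P.map (prod.fst : Y₁ ⨯ Y₂ ⟶ Y₁).op β₁ ⊔ P.map (prod.snd : Y₁ ⨯ Y₂ ⟶ Y₂).op β₂ := by
      rw [inf_sup_left]
      refine sup_le (le_trans ?_ le_sup_left) (le_trans ?_ le_sup_right)
      · calc (P.map (prod.fst : Y₁ ⨯ Y₂ ⟶ Y₁).op φ₁ ⊓ P.map (prod.snd : Y₁ ⨯ Y₂ ⟶ Y₂).op φ₂) ⊓ linf u
            ≤ P.map (prod.fst : Y₁ ⨯ Y₂ ⟶ Y₁).op φ₁ ⊓ linf u := inf_le_inf_right _ inf_le_left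
          _ = P.map (prod.fst : Y₁ ⨯ Y₂ ⟶ Y₁).op (φ₁ ⊓ linf (L₁.map fun f => P.map f.op α₁)) := by
              rw [map_inf, hA]
          _ ≤ P.map (prod.fst : Y₁ ⨯ Y₂ ⟶ Y₁).op β₁ := OrderHomClass.mono _ hle₁
      · calc (P.map (prod.fst : Y₁ ⨯ Y₂ ⟶ Y₁).op φ₁ ⊓ P.map (prod.snd : Y₁ ⨯ Y₂ ⟶ Y₂).op φ₂) ⊓ linf v
            ≤ P.map (prod.snd : Y₁ ⨯ Y₂ ⟶ Y₂).op φ₂ ⊓ linf v := inf_le_inf_right _ inf_le_right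
          _ = P.map (prod.snd : Y₁ ⨯ Y₂ ⟶ Y₂).op (φ₂ ⊓ linf (L₂.map fun f => P.map f.op α₂)) := by
              rw [map_inf, hB]
          _ ≤ P.map (prod.snd : Y₁ ⨯ Y₂ ⟶ Y₂).op β₂ := OrderHomClass.mono _ hle₂
    have hβG : P.map (prod.fst : Y₁ ⨯ Y₂ ⟶ Y₁).op β₁ ⊔ P.map (prod.snd : Y₁ ⨯ Y₂ ⟶ Y₂).op β₂ ∈ G (Y₁ ⨯ Y₂) :=
      (hGfil (Y₁ ⨯ Y₂)).2.2 _ _ hmem hineq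
    exact Set.eq_empty_iff_forall_notMem.mp (hGdisj (Y₁ ⨯ Y₂)) _ ⟨hβG, hβ⟩
  · -- ⊥ ∉ G t
    intro hbot
    exact Set.eq_empty_iff_forall_notMem.mp (hGdisj (⊤_ C)) ⊥ ⟨hbot, hI.2.2.2⟩

end BooleanDoctrine
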